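/- (Gradient of a function composed with the matrix exponential.) Let f : Matrix (Fin m) (Fin m) ℝ → ℝ be differentiable at exp(A), and let G ∈ Matrix (Fin m) (Fin m) ℝ be its Frobenius gradient at exp(A), i.e. fderiv ℝ f (exp A) (Y) = trace(Gᵀ * Y) for all Y. Then f ∘ exp is differentiable at A and its Frobenius gradient at A is (d exp)_{Aᵀ}(G): for all ξ ∈ Matrix (Fin m) (Fin m) ℝ, fderiv ℝ (f ∘ exp) A (ξ) = trace(((d exp)_{Aᵀ}(G))ᵀ * ξ). In symbols, ∇(f ∘ exp)(A) = (d exp)_{Aᵀ}(∇f(exp A)). -/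

import Mathlib

open scoped Matrix

attribute [local instance] Matrix.linftyOpNormedAddCommGroup Matrix.linftyOpNormedRing
  Matrix.linftyOpNormedAlgebra

namespace Statement9Aux

attribute [-instance] instTopologicalSpaceMatrix Matrix.instUniformSpace

variable {m : ℕ}

local notation "MM" => Matrix (Fin m) (Fin m) ℝ

/-- candidate derivative of `X ↦ X ^ n` at `X`. -/
noncomputable def L (n : ℕ) (X : MM) : MM →L[ℝ] MM :=
  ∑ i ∈ Finset.range n,
    ContinuousLinearMap.mulLeftRight ℝ MM (X ^ i) (X ^ (n - 1 - i))

lemma L_apply (n : ℕ) (X H : MM) :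
    L n X H = ∑ i ∈ Finset.range n, X ^ i * H * X ^ (n - 1 - i) := by
  simp [L, ContinuousLinearMap.sum_apply, ContinuousLinearMap.mulLeftRight_apply]

lemma hasFDerivAt_pow (n : ℕ) (X : MM) :
    HasFDerivAt (fun Y : MM => Y ^ n) (L n X) X := by
  induction n with
  | zero =>
      have : L 0 X = 0 := by simp [L]
      rw [this]
      simpa using hasFDerivAt_const (1 : MM) X
  | succ n ih =>
      have key := ih.mul' (hasFDerivAt_id X)
      have heq : L (n + 1) X
          = X ^ n • ContinuousLinearMap.id ℝ MM + (L n X).smulRight X := by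
        ext H
        simp only [ContinuousLinearMap.add_apply, ContinuousLinearMap.smul_apply,
          ContinuousLinearMap.smulRight_apply, ContinuousLinearMap.id_apply, L_apply,
          smul_eq_mul]
        have hterm : X ^ n * H * X ^ (n + 1 - 1 - n) = X ^ n * H := by
          rw [Nat.add_sub_cancel, Nat.sub_self, pow_zero, mul_one]
        have hsum : ∑ i ∈ Finset.range n, X ^ i * H * X ^ (n + 1 - 1 - i)
            = (∑ i ∈ Finset.range n, X ^ i * H * X ^ (n - 1 - i)) * X := by
          rw [Finset.sum_mul]
          refine Finset.sum_congr rfl fun i hi => ?_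
          have hi' : i < n := Finset.mem_range.mp hi
          have h2 : n + 1 - 1 - i = (n - 1 - i) + 1 := by omega
          rw [h2, pow_succ, ← mul_assoc]
        rw [Finset.sum_range_succ, hterm, hsum]
        rw [add_comm ((∑ i ∈ Finset.range n, X ^ i * H * X ^ (n - 1 - i)) * X) (X ^ n * H)]
      have hfun : (fun Y : MM => Y ^ (n + 1)) = fun Y => Y ^ n * Y :=
        funext fun Y => pow_succ Y n
      rw [heq, hfun]
      exact key

lemma norm_one_le : ‖(1 : MM)‖ ≤ 1 := by
  cases m with
  | zero =>
      have : (1 : Matrix (Fin 0) (Fin 0) ℝ) = 0 := by ext i; exact i.elim0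
      rw [this, norm_zero]; norm_num
  | succ k =>
      have h1 : (1 : Matrix (Fin (k + 1)) (Fin (k + 1)) ℝ) = Matrix.diagonal 1 :=
        (Matrix.diagonal_one).symm
      rw [h1, Matrix.linfty_opNorm_diagonal]
      exact le_of_eq norm_one

lemma norm_pow_le' {X : MM} {R : ℝ} (hX : ‖X‖ ≤ R) : ∀ i, ‖X ^ i‖ ≤ R ^ i := by
  intro i
  induction i with
  | zero => rw [pow_zero, pow_zero]; exact norm_one_le
  | succ i ih =>
      have hR : (0 : ℝ) ≤ R := le_trans (norm_nonneg X) hX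
      calc ‖X ^ (i + 1)‖ = ‖X ^ i * X‖ := by rw [pow_succ]
        _ ≤ ‖X ^ i‖ * ‖X‖ := norm_mul_le _ _
        _ ≤ R ^ i * R := by
            exact mul_le_mul ih hX (norm_nonneg X) (pow_nonneg hR i)
        _ = R ^ (i + 1) := (pow_succ R i).symm

lemma norm_L_le {X : MM} {R : ℝ} (hX : ‖X‖ ≤ R) (n : ℕ) :
    ‖L n X‖ ≤ n * R ^ (n - 1) := by
  have hR : (0 : ℝ) ≤ R := le_trans (norm_nonneg X) hX
  calc ‖L n X‖ ≤ ∑ i ∈ Finset.range n,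
        ‖ContinuousLinearMap.mulLeftRight ℝ MM (X ^ i) (X ^ (n - 1 - i))‖ :=
      norm_sum_le _ _
    _ ≤ ∑ i ∈ Finset.range n, R ^ (n - 1) := by
      refine Finset.sum_le_sum fun i hi => ?_
      have hi' : i < n := Finset.mem_range.mp hi
      calc ‖ContinuousLinearMap.mulLeftRight ℝ MM (X ^ i) (X ^ (n - 1 - i))‖
          ≤ ‖X ^ i‖ * ‖X ^ (n - 1 - i)‖ :=
            ContinuousLinearMap.opNorm_mulLeftRight_apply_apply_le ℝ MM _ _
        _ ≤ R ^ i * R ^ (n - 1 - i) := by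
            exact mul_le_mul (norm_pow_le' hX i) (norm_pow_le' hX _) (norm_nonneg _)
              (pow_nonneg hR i)
        _ = R ^ (n - 1) := by
            rw [← pow_add]; congr 1; omega
    _ = n * R ^ (n - 1) := by simp [Finset.sum_const, nsmul_eq_mul]

lemma summable_u (R : ℝ) :
    Summable fun n : ℕ => ((n.factorial : ℝ))⁻¹ * (n * R ^ (n - 1)) := by
  rw [← summable_nat_add_iff 1]
  refine (Real.summable_pow_div_factorial R).congr fun n => ?_
  have h3 : ((n.factorial : ℝ)) ≠ 0 := Nat.cast_ne_zero.mpr n.factorial_ne_zero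
  rw [Nat.add_sub_cancel, Nat.factorial_succ]
  push_cast
  field_simp

lemma norm_smul_L_le {X : MM} {R : ℝ} (hX : ‖X‖ ≤ R) (n : ℕ) :
    ‖((n.factorial : ℝ))⁻¹ • L n X‖ ≤ ((n.factorial : ℝ))⁻¹ * (n * R ^ (n - 1)) := by
  rw [norm_smul ((n.factorial : ℝ))⁻¹ (L n X), Real.norm_eq_abs,
    abs_of_nonneg (by positivity : (0:ℝ) ≤ ((n.factorial : ℝ))⁻¹)]
  exact mul_le_mul_of_nonneg_left (norm_L_le hX n) (by positivity)

lemma summable_smul_L (X : MM) :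
    Summable fun n : ℕ => ((n.factorial : ℝ))⁻¹ • L n X :=
  Summable.of_norm_bounded (summable_u ‖X‖) (norm_smul_L_le le_rfl)

/-- the derivative of the matrix exponential. -/
noncomputable def D (X : MM) : MM →L[ℝ] MM :=
  ∑' n : ℕ, ((n.factorial : ℝ))⁻¹ • L n X

lemma hasFDerivAt_exp (A : MM) : HasFDerivAt (NormedSpace.exp) (D A) A := by
  have hfun : (NormedSpace.exp : MM → MM)
      = fun X => ∑' n : ℕ, ((n.factorial : ℝ))⁻¹ • X ^ n := by
    funext X; rw [NormedSpace.exp_eq_tsum (𝕂 := ℝ)]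
  rw [hfun]
  have hball : A ∈ Metric.ball (0 : MM) (‖A‖ + 1) := by
    simp [mem_ball_zero_iff]
  refine hasFDerivAt_tsum_of_isPreconnected
    (u := fun n : ℕ => ((n.factorial : ℝ))⁻¹ * (n * (‖A‖ + 1) ^ (n - 1)))
    (summable_u _) Metric.isOpen_ball
    ((convex_ball (0 : MM) (‖A‖ + 1)).isPreconnected)
    (fun n X _ => (hasFDerivAt_pow n X).const_smul _)
    (fun n X hXball => norm_smul_L_le (le_of_lt (mem_ball_zero_iff.mp hXball)) n)
    (Metric.mem_ball_self (by positivity))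
    ?_ hball
  exact NormedSpace.expSeries_summable' (𝕂 := ℝ) (0 : MM)


lemma summable_smul_L_apply (X H : MM) :
    Summable fun n : ℕ => ((n.factorial : ℝ))⁻¹ • L n X H := by
  have := (summable_smul_L X).map (ContinuousLinearMap.apply ℝ MM H)
    (ContinuousLinearMap.apply ℝ MM H).continuous
  simpa [Function.comp_def, ContinuousLinearMap.apply_apply] using this

/-- `M ↦ trace (P * M)` as a continuous linear map. -/
noncomputable def trL (P : MM) : MM →L[ℝ] ℝ :=
  LinearMap.toContinuousLinearMap
    { toFun := fun M => (P * M).trace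
      map_add' := fun M N => by rw [Matrix.mul_add, Matrix.trace_add]
      map_smul' := fun c M => by
        rw [Matrix.mul_smul, Matrix.trace_smul, RingHom.id_apply, smul_eq_mul] }

/-- `M ↦ trace (Mᵀ * ξ)` as a continuous linear map. -/
noncomputable def trR (ξ : MM) : MM →L[ℝ] ℝ :=
  LinearMap.toContinuousLinearMap
    { toFun := fun M => (Mᵀ * ξ).trace
      map_add' := fun M N => by
        rw [Matrix.transpose_add, Matrix.add_mul, Matrix.trace_add]
      map_smul' := fun c M => by
        rw [Matrix.transpose_smul, Matrix.smul_mul, Matrix.trace_smul, RingHom.id_apply,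
          smul_eq_mul] }

@[simp] lemma trL_apply (P M : MM) : trL P M = (P * M).trace := rfl
@[simp] lemma trR_apply (ξ M : MM) : trR ξ M = (Mᵀ * ξ).trace := rfl

lemma D_apply (X H : MM) : D X H = ∑' n : ℕ, ((n.factorial : ℝ))⁻¹ • L n X H := by
  have := (ContinuousLinearMap.apply ℝ MM H).map_tsum (summable_smul_L X)
  simpa [D, ContinuousLinearMap.apply_apply] using this

lemma term_eq (A G ξ : MM) (n : ℕ) :
    (Gᵀ * L n A ξ).trace = ((L n Aᵀ G)ᵀ * ξ).trace := by
  rw [L_apply, L_apply, Finset.mul_sum, Matrix.transpose_sum, Finset.sum_mul,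
    Matrix.trace_sum, Matrix.trace_sum]
  refine Finset.sum_congr rfl fun i _ => ?_
  have h1 : (Aᵀ ^ i * G * Aᵀ ^ (n - 1 - i))ᵀ * ξ
      = A ^ (n - 1 - i) * (Gᵀ * A ^ i * ξ) := by
    rw [Matrix.transpose_mul, Matrix.transpose_mul, Matrix.transpose_pow, Matrix.transpose_pow,
      Matrix.transpose_transpose]
    noncomm_ring
  have h2 : Gᵀ * (A ^ i * ξ * A ^ (n - 1 - i))
      = Gᵀ * A ^ i * ξ * A ^ (n - 1 - i) := by noncomm_ring
  rw [h1, h2, Matrix.trace_mul_comm]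

lemma trace_eq (A G ξ : MM) : (Gᵀ * D A ξ).trace = ((D Aᵀ G)ᵀ * ξ).trace := by
  have h1 : (Gᵀ * D A ξ).trace = ∑' n : ℕ, ((n.factorial : ℝ))⁻¹ * (Gᵀ * L n A ξ).trace := by
    have := (trL Gᵀ).map_tsum (summable_smul_L_apply A ξ)
    rw [D_apply] at *
    simpa [smul_eq_mul] using this
  have h2 : ((D Aᵀ G)ᵀ * ξ).trace
      = ∑' n : ℕ, ((n.factorial : ℝ))⁻¹ * ((L n Aᵀ G)ᵀ * ξ).trace := by
    have := (trR ξ).map_tsum (summable_smul_L_apply Aᵀ G)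
    rw [D_apply] at *
    simpa [smul_eq_mul] using this
  rw [h1, h2]
  exact tsum_congr fun n => by rw [term_eq]

theorem statement9' (f : MM → ℝ) (A G : MM)
    (hf : DifferentiableAt ℝ f (NormedSpace.exp A))
    (hG : ∀ Y : MM, fderiv ℝ f (NormedSpace.exp A) Y = (Gᵀ * Y).trace) :
    DifferentiableAt ℝ (f ∘ NormedSpace.exp) A ∧
      ∀ ξ : MM, fderiv ℝ (f ∘ NormedSpace.exp) A ξ =
          ((fderiv ℝ (NormedSpace.exp) Aᵀ G)ᵀ * ξ).trace := by
  have hD := hasFDerivAt_exp A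
  have hcomp : HasFDerivAt (f ∘ NormedSpace.exp)
      ((fderiv ℝ f (NormedSpace.exp A)).comp (D A)) A :=
    hf.hasFDerivAt.comp A hD
  refine ⟨hcomp.differentiableAt, fun ξ => ?_⟩
  rw [hcomp.fderiv, (hasFDerivAt_exp Aᵀ).fderiv]
  rw [ContinuousLinearMap.comp_apply, hG]
  exact trace_eq A G ξ

end Statement9Aux

/-- Gradient of a function composed with the matrix exponential: if `G` is the Frobenius
gradient of `f` at `exp A`, then `f ∘ exp` is differentiable at `A` and its Frobenius
gradient at `A` is `(d exp)_{Aᵀ} G`, i.e. `∇(f ∘ exp)(A) = (d exp)_{Aᵀ}(∇f(exp A))`. -/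
theorem statement9 (m : ℕ) (f : Matrix (Fin m) (Fin m) ℝ → ℝ)
    (A G : Matrix (Fin m) (Fin m) ℝ)
    (hf : DifferentiableAt ℝ f (NormedSpace.exp A))
    (hG : ∀ Y : Matrix (Fin m) (Fin m) ℝ,
      fderiv ℝ f (NormedSpace.exp A) Y = (Gᵀ * Y).trace) :
    DifferentiableAt ℝ (f ∘ NormedSpace.exp) A ∧
      ∀ ξ : Matrix (Fin m) (Fin m) ℝ,
        fderiv ℝ (f ∘ NormedSpace.exp) A ξ =
          ((fderiv ℝ (NormedSpace.exp) Aᵀ G)ᵀ * ξ).trace := by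
  exact Statement9Aux.statement9' f A G hf hG
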